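/- Let (Ω, P) be a probability space, let A be a nonempty finite index set, let (X_i)_{i∈A} be mutually independent random variables taking values in {0,1} with P(X_i = 1) = y_i where 0 < y_i ≤ 1 for each i ∈ A, and let c_i ≥ 0 for i ∈ A be real numbers. Then E[ 1_{{ω : ∃ i ∈ A, X_i(ω) = 1}} · min{ c_i : i ∈ A, X_i(ω) = 1 } ] ≤ ( (Σ_{i∈A} y_i c_i)/(Σ_{i∈A} y_i) ) · P(∃ i ∈ A, X_i = 1). -/

import Mathlib

open MeasureTheory ProbabilityTheory Finset

/-- Expected distance to the closest open facility: facilities `i` are opened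
independently (indicator variables `X i` with `P(X i = 1) = y i`), and the
expected distance to the closest open facility (0 if none is open, enforced by
the indicator) is at most the weighted average distance `(∑ y i * c i)/(∑ y i)`
times the probability that at least one facility is open. -/
private lemma cheb {n : ℕ} (a w u : Fin n → ℝ) (hu : ∀ k, 0 ≤ u k)
    (ha : Monotone a) (hw : Antitone w) :
    (∑ k, u k * (a k * w k)) * (∑ k, u k) ≤ (∑ k, u k * a k) * (∑ k, u k * w k) := by
  have key : 0 ≤ ∑ k : Fin n, ∑ l : Fin n, u k * u l * ((a l - a k) * (w k - w l)) := by
    refine Finset.sum_nonneg fun k _ => Finset.sum_nonneg fun l _ => ?_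
    refine mul_nonneg (mul_nonneg (hu k) (hu l)) ?_
    rcases le_total k l with h | h
    · exact mul_nonneg (sub_nonneg.2 (ha h)) (sub_nonneg.2 (hw h))
    · nlinarith [ha h, hw h]
  have expand : ∑ k : Fin n, ∑ l : Fin n, u k * u l * ((a l - a k) * (w k - w l))
      = (∑ k, u k * w k) * (∑ k, u k * a k) + (∑ k, u k * a k) * (∑ k, u k * w k)
        - (∑ k, u k) * (∑ k, u k * (a k * w k)) - (∑ k, u k * (a k * w k)) * (∑ k, u k) := by
    rw [Finset.sum_mul_sum, Finset.sum_mul_sum, Finset.sum_mul_sum, Finset.sum_mul_sum,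
      ← Finset.sum_add_distrib, ← Finset.sum_sub_distrib, ← Finset.sum_sub_distrib]
    refine Finset.sum_congr rfl fun k _ => ?_
    rw [← Finset.sum_add_distrib, ← Finset.sum_sub_distrib, ← Finset.sum_sub_distrib]
    refine Finset.sum_congr rfl fun l _ => ?_
    ring
  rw [expand] at key
  nlinarith [key]


/-- Expected distance to the closest open facility: facilities `i` are opened
independently (indicator variables `X i` with `P(X i = 1) = y i`), and the
expected distance to the closest open facility (0 if none is open, enforced by
the indicator) is at most the weighted average distance `(∑ y i * c i)/(∑ y i)`
times the probability that at least one facility is open. -/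

theorem stmt_4 {Ω ι : Type*} [MeasurableSpace Ω] (P : Measure Ω)
    [IsProbabilityMeasure P] [Fintype ι] [Nonempty ι]
    (X : ι → Ω → ℝ) (hmeas : ∀ i, Measurable (X i))
    (hval : ∀ i, ∀ ω, X i ω = 0 ∨ X i ω = 1)
    (y : ι → ℝ) (hy : ∀ i, 0 < y i ∧ y i ≤ 1)
    (hPy : ∀ i, P {ω | X i ω = 1} = ENNReal.ofReal (y i))
    (hindep : iIndepFun X P)
    (c : ι → ℝ) (hc : ∀ i, 0 ≤ c i) :
    ∫ ω, Set.indicator {ω | ∃ i, X i ω = 1}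
        (fun ω => sInf (c '' {i | X i ω = 1})) ω ∂P ≤
      ((∑ i, y i * c i) / (∑ i, y i)) * (P {ω | ∃ i, X i ω = 1}).toReal := by
  classical
  set n := Fintype.card ι with hn
  have hnpos : 0 < n := Fintype.card_pos
  obtain ⟨e, hmono⟩ : ∃ e : Fin n ≃ ι, Monotone (fun k => c (e k)) := by
    let e₀ := (Fintype.equivFin ι).symm
    exact ⟨(Tuple.sort (c ∘ e₀)).trans e₀, Tuple.monotone_sort (c ∘ e₀)⟩
  set E : Set Ω := {ω | ∃ i, X i ω = 1} with hE
  set A : Fin n → Set Ω :=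
    fun k => (X (e k) ⁻¹' {1}) ∩ ⋂ j ∈ Finset.Iio k, (X (e j) ⁻¹' {0}) with hA
  have hm1 : ∀ i, MeasurableSet (X i ⁻¹' ({1} : Set ℝ)) :=
    fun i => hmeas i (measurableSet_singleton 1)
  have hm0 : ∀ i, MeasurableSet (X i ⁻¹' ({0} : Set ℝ)) :=
    fun i => hmeas i (measurableSet_singleton 0)
  have hmA : ∀ k, MeasurableSet (A k) := fun k =>
    (hm1 _).inter (Finset.measurableSet_biInter _ fun j _ => hm0 _)
  have hmE : MeasurableSet E := by
    have : E = ⋃ i, X i ⁻¹' {1} := by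
      ext ω; simp [hE, Set.mem_iUnion]
    rw [this]; exact MeasurableSet.iUnion fun i => hm1 i
  have hsub : ∀ k, A k ⊆ E := fun k ω hω => ⟨e k, hω.1⟩
  have hd : ∀ {k l : Fin n}, k < l → Disjoint (A k) (A l) := by
    intro k l hkl
    rw [Set.disjoint_left]
    rintro ω ⟨h1, -⟩ ⟨-, h0⟩
    have h0k : X (e k) ω = 0 := Set.mem_iInter₂.1 h0 k (Finset.mem_Iio.2 hkl)
    have h1k : X (e k) ω = 1 := h1
    norm_num [h0k] at h1k
  have hdisj : Pairwise (Function.onFun Disjoint A) := by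
    intro k l hkl
    rcases hkl.lt_or_gt with h | h
    · exact hd h
    · exact (hd h).symm
  have hcover : (⋃ k, A k) = E := by
    ext ω
    constructor
    · rintro ⟨-, ⟨k, rfl⟩, hω⟩
      exact hsub k hω
    · rintro ⟨i, hi⟩
      have hT : (Finset.univ.filter fun k => X (e k) ω = 1).Nonempty :=
        ⟨e.symm i, by simp [Equiv.apply_symm_apply, hi]⟩
      set k₀ := (Finset.univ.filter fun k => X (e k) ω = 1).min' hT with hk₀
      have hk₀mem : X (e k₀) ω = 1 :=
        (Finset.mem_filter.1 (Finset.min'_mem _ hT)).2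
      refine Set.mem_iUnion.2 ⟨k₀, hk₀mem, Set.mem_iInter₂.2 fun j hj => ?_⟩
      rcases hval (e j) ω with h0 | h1
      · exact h0
      · exfalso
        have : k₀ ≤ j := Finset.min'_le _ _ (by simp [h1])
        exact absurd (Finset.mem_Iio.1 hj) (not_lt.2 this)
  have hval_eq : ∀ k, ∀ ω ∈ A k, sInf (c '' {i | X i ω = 1}) = c (e k) := by
    rintro k ω ⟨h1, h0⟩
    have hmem : e k ∈ {i | X i ω = 1} := h1
    apply le_antisymm
    · exact csInf_le ⟨0, fun x ⟨i, _, hx⟩ => hx ▸ hc i⟩ ⟨e k, hmem, rfl⟩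
    · refine le_csInf ⟨_, ⟨e k, hmem, rfl⟩⟩ ?_
      rintro x ⟨i, hi, rfl⟩
      have hnot : ¬ e.symm i < k := by
        intro hlt
        have h0i : X (e (e.symm i)) ω = 0 :=
          Set.mem_iInter₂.1 h0 (e.symm i) (Finset.mem_Iio.2 hlt)
        rw [Equiv.apply_symm_apply] at h0i
        have : X i ω = 1 := hi
        norm_num [h0i] at this
      calc c (e k) ≤ c (e (e.symm i)) := hmono (not_lt.1 hnot)
        _ = c i := by rw [Equiv.apply_symm_apply]
  have hpt : ∀ ω, Set.indicator E (fun ω => sInf (c '' {i | X i ω = 1})) ω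
      = ∑ k, Set.indicator (A k) (fun _ => c (e k)) ω := by
    intro ω
    by_cases hω : ω ∈ E
    · obtain ⟨k₀, hk₀⟩ : ∃ k, ω ∈ A k := Set.mem_iUnion.1 (hcover ▸ hω)
      rw [Set.indicator_of_mem hω, hval_eq k₀ ω hk₀, Finset.sum_eq_single k₀]
      · rw [Set.indicator_of_mem hk₀]
      · intro k _ hk
        exact Set.indicator_of_notMem
          (fun h => Set.disjoint_left.1 (hdisj hk) h hk₀) _
      · simp
    · rw [Set.indicator_of_notMem hω]
      symm
      refine Finset.sum_eq_zero fun k _ => ?_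
      exact Set.indicator_of_notMem (fun h => hω (hsub k h)) _
  have hint : ∫ ω, Set.indicator E (fun ω => sInf (c '' {i | X i ω = 1})) ω ∂P
      = ∑ k, (P (A k)).toReal * c (e k) := by
    simp_rw [hpt]
    rw [integral_finset_sum _ (fun k _ => (integrable_const _).indicator (hmA k))]
    refine Finset.sum_congr rfl fun k _ => ?_
    rw [integral_indicator_const _ (hmA k), smul_eq_mul, measureReal_def]
  have hP1 : ∀ i, P (X i ⁻¹' ({1} : Set ℝ)) = ENNReal.ofReal (y i) := fun i => hPy i
  have hp0 : ∀ i, P (X i ⁻¹' ({0} : Set ℝ)) = 1 - ENNReal.ofReal (y i) := by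
    intro i
    have hcompl : X i ⁻¹' ({0} : Set ℝ) = (X i ⁻¹' ({1} : Set ℝ))ᶜ := by
      ext ω
      simp only [Set.mem_preimage, Set.mem_singleton_iff, Set.mem_compl_iff]
      constructor
      · intro h h1; rw [h] at h1; norm_num at h1
      · intro h; rcases hval i ω with h0 | h1
        · exact h0
        · exact absurd h1 h
    rw [hcompl, prob_compl_eq_one_sub (hm1 i), hP1 i]
  have hPA : ∀ k, P (A k)
      = ENNReal.ofReal (y (e k)) * ∏ j ∈ Finset.Iio k, (1 - ENNReal.ofReal (y (e j))) := by
    intro k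
    have hAeq : A k = ⋂ i ∈ (Finset.Iic k).image e,
        X i ⁻¹' (if i = e k then ({1} : Set ℝ) else {0}) := by
      ext ω
      constructor
      · rintro ⟨h1, h0⟩
        refine Set.mem_iInter₂.2 ?_
        rintro i hi
        obtain ⟨j, hj, rfl⟩ := Finset.mem_image.1 hi
        by_cases hjk : j = k
        · subst hjk
          simpa [if_pos rfl] using h1
        · rw [if_neg (fun hh => hjk (e.injective hh))]
          exact Set.mem_iInter₂.1 h0 j (Finset.mem_Iio.2 (lt_of_le_of_ne (Finset.mem_Iic.1 hj) hjk))
      · intro h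
        have h' := Set.mem_iInter₂.1 h
        constructor
        · have := h' (e k) (Finset.mem_image.2 ⟨k, Finset.mem_Iic.2 le_rfl, rfl⟩)
          simpa [if_pos rfl] using this
        · refine Set.mem_iInter₂.2 fun j hj => ?_
          have hjk : j ≠ k := fun hh => by
            subst hh; exact absurd (Finset.mem_Iio.1 hj) (lt_irrefl _)
          have := h' (e j) (Finset.mem_image.2 ⟨j, Finset.mem_Iic.2 (le_of_lt (Finset.mem_Iio.1 hj)), rfl⟩)
          rwa [if_neg (fun hh => hjk (e.injective hh))] at this
    have hprod := (iIndepFun_iff_measure_inter_preimage_eq_mul.1 hindep)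
      ((Finset.Iic k).image e)
      (sets := fun i => if i = e k then ({1} : Set ℝ) else {0})
      (fun i _ => by
        show MeasurableSet (if i = e k then ({1} : Set ℝ) else {0})
        split <;> exact measurableSet_singleton _)
    rw [hAeq, hprod, Finset.prod_image (fun j _ j' _ hh => e.injective hh)]
    rw [← Finset.Iio_insert, Finset.prod_insert (by simp)]
    beta_reduce
    rw [if_pos rfl, hP1]
    congr 1
    refine Finset.prod_congr rfl fun j hj => ?_
    have hjk : j ≠ k := ne_of_lt (Finset.mem_Iio.1 hj)
    rw [if_neg (fun hh => hjk (e.injective hh)), hp0]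
  have hPAr : ∀ k, (P (A k)).toReal
      = y (e k) * ∏ j ∈ Finset.Iio k, (1 - y (e j)) := by
    intro k
    rw [hPA, ENNReal.toReal_mul, ENNReal.toReal_prod,
      ENNReal.toReal_ofReal (hy _).1.le]
    congr 1
    refine Finset.prod_congr rfl fun j _ => ?_
    rw [ENNReal.toReal_sub_of_le (ENNReal.ofReal_le_one.2 (hy _).2) ENNReal.one_ne_top,
      ENNReal.toReal_ofReal (hy _).1.le, ENNReal.toReal_one]
  have hPE : (P E).toReal = ∑ k, (P (A k)).toReal := by
    rw [← hcover, measure_iUnion hdisj hmA, tsum_fintype,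
      ENNReal.toReal_sum (fun k _ => measure_ne_top P _)]
  -- abbreviations
  set u : Fin n → ℝ := fun k => y (e k) with hu_def
  set w : Fin n → ℝ := fun k => ∏ j ∈ Finset.Iio k, (1 - y (e j)) with hw_def
  set a : Fin n → ℝ := fun k => c (e k) with ha_def
  have hw_nonneg : ∀ k, (0:ℝ) ≤ w k :=
    fun k => Finset.prod_nonneg fun j _ => by linarith [(hy (e j)).2]
  have hw_anti : Antitone w := by
    intro k l hkl
    have hsubs : Finset.Iio k ⊆ Finset.Iio l := Finset.Iio_subset_Iio hkl
    rw [hw_def]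
    dsimp only
    rw [← Finset.prod_sdiff hsubs]
    have h1 : ∏ j ∈ Finset.Iio l \ Finset.Iio k, (1 - y (e j)) ≤ 1 :=
      Finset.prod_le_one (fun j _ => by linarith [(hy (e j)).2])
        (fun j _ => by linarith [(hy (e j)).1])
    have h2 : (0:ℝ) ≤ ∏ j ∈ Finset.Iio k, (1 - y (e j)) :=
      Finset.prod_nonneg fun j _ => by linarith [(hy (e j)).2]
    calc (∏ j ∈ Finset.Iio l \ Finset.Iio k, (1 - y (e j))) * ∏ j ∈ Finset.Iio k, (1 - y (e j))
        ≤ 1 * ∏ j ∈ Finset.Iio k, (1 - y (e j)) := by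
          apply mul_le_mul_of_nonneg_right h1 h2
      _ = _ := one_mul _
  have hu_nonneg : ∀ k, (0:ℝ) ≤ u k := fun k => (hy _).1.le
  have hSy : (0:ℝ) < ∑ k, u k :=
    Finset.sum_pos (fun k _ => (hy _).1) ⟨⟨0, hnpos⟩, Finset.mem_univ _⟩
  have hsum1 : ∑ i, y i * c i = ∑ k, u k * a k :=
    (Equiv.sum_comp e fun i => y i * c i).symm
  have hsum2 : ∑ i, y i = ∑ k, u k := (Equiv.sum_comp e y).symm
  rw [hint, hPE, hsum1, hsum2]
  simp_rw [hPAr]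
  have hL : ∑ k, (u k * w k) * a k = ∑ k, u k * (a k * w k) :=
    Finset.sum_congr rfl fun k _ => by ring
  rw [div_mul_eq_mul_div, le_div_iff₀ hSy]
  calc (∑ k, u k * w k * a k) * ∑ k, u k
      = (∑ k, u k * (a k * w k)) * ∑ k, u k := by rw [hL]
    _ ≤ (∑ k, u k * a k) * ∑ k, u k * w k := cheb a w u hu_nonneg hmono hw_anti
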